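/- Suppose T : X → X is bounded with ⟨Im(T)x, x⟩ ≤ 0 for all x, and Re(T) = C + K with C self-adjoint coercive and K compact. If the null space N of Re(T) is finite dimensional and ⟨Im(T)x, x⟩ < 0 for all nonzero x ∈ N, then T is injective. -/

import Mathlib

open ContinuousLinearMap
open scoped InnerProductSpace

/-- If `A` is self-adjoint with nonnegative quadratic form and `⟪A x, x⟫ = 0`, then `A x = 0`. -/
lemma aux_pos_inner_zero {X : Type*} [NormedAddCommGroup X] [InnerProductSpace ℂ X]
    [CompleteSpace X] (A : X →L[ℂ] X) (hA : IsSelfAdjoint A)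
    (hpos : ∀ y : X, 0 ≤ (⟪A y, y⟫_ℂ).re) (x : X) (hx : (⟪A x, x⟫_ℂ).re = 0) :
    A x = 0 := by
  have key : ∀ y : X, (⟪A x, y⟫_ℂ).re = 0 := by
    intro y
    have hsym : ∀ u v : X, ⟪A u, v⟫_ℂ = ⟪u, A v⟫_ℂ := fun u v => hA.isSymmetric u v
    have h2 : ∀ t : ℝ, 0 ≤ 2 * t * (⟪A x, y⟫_ℂ).re + t ^ 2 * (⟪A y, y⟫_ℂ).re := by
      intro t
      have := hpos (x + (t : ℂ) • y)
      have hexp : (⟪A (x + (t : ℂ) • y), x + (t : ℂ) • y⟫_ℂ).re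
          = (⟪A x, x⟫_ℂ).re + 2 * t * (⟪A x, y⟫_ℂ).re + t ^ 2 * (⟪A y, y⟫_ℂ).re := by
        have hAyx : ⟪A y, x⟫_ℂ = starRingEnd ℂ ⟪A x, y⟫_ℂ := by
          rw [hsym y x, inner_conj_symm]
        rw [map_add, map_smul, inner_add_left, inner_add_right, inner_add_right,
          inner_smul_left, inner_smul_right, inner_smul_left, inner_smul_right, hAyx]
        simp [Complex.add_re, Complex.mul_re, Complex.conj_re, Complex.conj_im,
          Complex.ofReal_re, Complex.ofReal_im]
        have hre : (⟪y, A x⟫_ℂ).re = (⟪A x, y⟫_ℂ).re := by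
          simpa using inner_re_symm (𝕜 := ℂ) y (A x)
        rw [hre]; ring
      rw [hexp, hx] at this; linarith
    set a := (⟪A x, y⟫_ℂ).re with ha
    set b := (⟪A y, y⟫_ℂ).re with hb
    have hbnn : 0 ≤ b := hpos y
    by_contra hane
    have := h2 (-a / (b + 1))
    have hb1 : 0 < b + 1 := by linarith
    have : 0 ≤ a ^ 2 * (-(b + 2)) / (b + 1) ^ 2 := by
      have hcalc : 2 * (-a / (b + 1)) * a + (-a / (b + 1)) ^ 2 * b
          = a ^ 2 * (-(b + 2)) / (b + 1) ^ 2 := by field_simp; ring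
      linarith [hcalc ▸ this]
    have hneg : a ^ 2 * (-(b + 2)) / (b + 1) ^ 2 < 0 := by
      apply div_neg_of_neg_of_pos
      · have : 0 < a ^ 2 := by positivity
        nlinarith
      · positivity
    linarith
  have keyC : ∀ y : X, ⟪A x, y⟫_ℂ = 0 := by
    intro y
    have h1 := key y
    have h2 := key ((Complex.I) • y)
    rw [inner_smul_right] at h2
    have him : (⟪A x, y⟫_ℂ).im = 0 := by
      simpa [Complex.mul_re] using h2
    exact Complex.ext h1 him
  have := keyC (A x)
  rwa [inner_self_eq_zero] at this

/-- If `Im(T) ≤ 0` on `X`, `Re(T) = C + K` with `C` self-adjoint coercive and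
`K` compact, the null space `N` of `Re(T)` is finite dimensional and `⟨Im(T)x, x⟩ < 0` for all
nonzero `x ∈ N`, then `T` is injective. -/
theorem stmt11 {X : Type*} [NormedAddCommGroup X] [InnerProductSpace ℂ X] [CompleteSpace X]
    (T C K : X →L[ℂ] X)
    (hImT : ∀ x : X, (⟪((1 / (2 * Complex.I)) • (T - adjoint T)) x, x⟫_ℂ).re ≤ 0)
    (hReT : (1 / 2 : ℂ) • (T + adjoint T) = C + K)
    (hCsa : IsSelfAdjoint C) (c : ℝ) (hc : 0 < c)
    (hCcoer : ∀ x : X, c * ‖x‖ ^ 2 ≤ (⟪C x, x⟫_ℂ).re)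
    (hK : IsCompactOperator K)
    (hN : FiniteDimensional ℂ (LinearMap.ker (((1 / 2 : ℂ) • (T + adjoint T) : X →L[ℂ] X) : X →ₗ[ℂ] X)))
    (hstrict : ∀ x : X, ((1 / 2 : ℂ) • (T + adjoint T)) x = 0 → x ≠ 0 →
      (⟪((1 / (2 * Complex.I)) • (T - adjoint T)) x, x⟫_ℂ).re < 0) :
    Function.Injective T := by
  set A : X →L[ℂ] X := -((1 / (2 * Complex.I)) • (T - adjoint T)) with hAdef
  have hAsa : IsSelfAdjoint A := by
    rw [IsSelfAdjoint, hAdef]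
    rw [star_neg, star_smul, star_sub, star_eq_adjoint, star_eq_adjoint, adjoint_adjoint]
    have hconj : star (1 / (2 * Complex.I)) = -(1 / (2 * Complex.I)) := by
      simp [Complex.star_def, Complex.ext_iff, Complex.div_im, Complex.div_re]
    rw [hconj]
    simp only [neg_smul, neg_neg, smul_sub]
    abel
  have hApos : ∀ y : X, 0 ≤ (⟪A y, y⟫_ℂ).re := by
    intro y
    have := hImT y
    have hAy : A y = -(((1 / (2 * Complex.I)) • (T - adjoint T)) y) := by simp [hAdef]
    rw [hAy, inner_neg_left]
    simpa using neg_nonneg.mpr this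
  have hker : ∀ x : X, T x = 0 → x = 0 := by
    intro x hx
    by_contra hxne
    have hadj : ⟪(adjoint T) x, x⟫_ℂ = 0 := by
      rw [adjoint_inner_left, hx, inner_zero_right]
    have hAxx : (⟪A x, x⟫_ℂ).re = 0 := by
      have : A x = -((1 / (2 * Complex.I)) • (T x - (adjoint T) x)) := by simp [hAdef]
      rw [this, hx, zero_sub, inner_neg_left, inner_smul_left, inner_neg_left, hadj]
      simp
    have hAx : A x = 0 := aux_pos_inner_zero A hAsa hApos x hAxx
    have hTadjx : (adjoint T) x = 0 := by
      have h1 : ((1 / (2 * Complex.I)) • (T - adjoint T)) x = 0 := by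
        have : A x = -(((1 / (2 * Complex.I)) • (T - adjoint T)) x) := by simp [hAdef]
        rw [this] at hAx; simpa using hAx
      have h2 : (1 / (2 * Complex.I)) • (T x - (adjoint T) x) = 0 := by
        simpa using h1
      have hne : (1 / (2 * Complex.I) : ℂ) ≠ 0 := by
        simp [Complex.I_ne_zero]
      have := smul_eq_zero.mp h2
      rcases this with h | h
      · exact absurd h hne
      · rw [hx, zero_sub, neg_eq_zero] at h; exact h
    have hReTx : ((1 / 2 : ℂ) • (T + adjoint T)) x = 0 := by
      simp [hx, hTadjx]
    have hlt := hstrict x hReTx hxne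
    have hImx : ((1 / (2 * Complex.I)) • (T - adjoint T)) x = 0 := by
      simp [hx, hTadjx]
    rw [hImx] at hlt
    simp at hlt
  intro a b hab
  have h0 : T (a - b) = 0 := by rw [map_sub, hab, sub_self]
  exact sub_eq_zero.mp (hker _ h0)
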